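/- Let d ≥ 2, 0 < ε < (1/(d-1) − 1/d)/2, define n₀ = n, n_{i+1} = ⌈n_i^{1-ε}⌉, t_i = n/n_i, and let ℓ be minimal with n_ℓ ≤ 2. Then ∑_{i=0}^{ℓ-1} (t_{i+1}/t_i) · t_i^{1-1/d} · n_i^{1−1/(d−1)+ε} = O(n^{1−1/d}). -/

import Mathlib

open Finset Real

lemma seq_mono (ε : ℝ) (hε0 : 0 < ε) (f : ℕ → ℕ)
    (hrec : ∀ i, f (i + 1) = ⌈(f i : ℝ) ^ (1 - ε)⌉₊) (ℓ : ℕ)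
    (hbig : ∀ j < ℓ, 2 < f j) :
    ∀ i j, i ≤ j → j ≤ ℓ → f j ≤ f i := by
  have step : ∀ k, k < ℓ → f (k + 1) ≤ f k := by
    intro k hk
    have h1 : (1 : ℝ) ≤ (f k : ℝ) := by
      have := hbig k hk; exact_mod_cast by omega
    rw [hrec k, Nat.ceil_le]
    calc ((f k : ℝ)) ^ (1 - ε) ≤ (f k : ℝ) ^ (1 : ℝ) :=
          Real.rpow_le_rpow_of_exponent_le h1 (by linarith)
      _ = (f k : ℝ) := Real.rpow_one _
  intro i j hij hjl
  induction j with
  | zero => have : i = 0 := by omega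
            subst this; exact le_rfl
  | succ m ih =>
    rcases Nat.eq_or_lt_of_le hij with h | h
    · subst h; exact le_rfl
    · exact le_trans (step m (by omega)) (ih (by omega) (by omega))

lemma seq_strict (ε : ℝ) (hε0 : 0 < ε) (f : ℕ → ℕ)
    (hrec : ∀ i, f (i + 1) = ⌈(f i : ℝ) ^ (1 - ε)⌉₊) (ℓ : ℕ) (hℓ : f ℓ ≤ 2)
    (hbig : ∀ j < ℓ, 2 < f j) :
    ∀ j < ℓ, f (j + 1) < f j := by
  intro j hj
  by_contra hcon
  push_neg at hcon
  have heq : f (j + 1) = f j :=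
    le_antisymm (seq_mono ε hε0 f hrec ℓ hbig j (j+1) (by omega) (by omega)) hcon
  have hconst : ∀ k, f (j + k) = f j := by
    intro k
    induction k with
    | zero => rfl
    | succ m ih =>
      have h2 : f (j + m + 1) = ⌈(f (j+m) : ℝ) ^ (1 - ε)⌉₊ := hrec _
      rw [ih] at h2
      rw [show j + (m+1) = j + m + 1 by ring, h2, ← hrec j, heq]
  have hfl : f ℓ = f j := by
    have := hconst (ℓ - j); rwa [show j + (ℓ - j) = ℓ by omega] at this
  have := hbig j hj
  omega

lemma seq_gap (ε : ℝ) (hε0 : 0 < ε) (f : ℕ → ℕ)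
    (hrec : ∀ i, f (i + 1) = ⌈(f i : ℝ) ^ (1 - ε)⌉₊) (ℓ : ℕ) (hℓ : f ℓ ≤ 2)
    (hbig : ∀ j < ℓ, 2 < f j) :
    ∀ k i, i + k < ℓ → f (i + k) + k ≤ f i := by
  intro k
  induction k with
  | zero => intro i _; simp
  | succ m ih =>
    intro i h
    have h1 : f (i + 1) < f i := seq_strict ε hε0 f hrec ℓ hℓ hbig i (by omega)
    have h2 : f ((i+1) + m) + m ≤ f (i+1) := ih (i+1) (by omega)
    rw [show i + (m+1) = (i+1) + m from by omega]
    omega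

lemma seq_halve (ε : ℝ) (hε0 : 0 < ε) (hε1 : ε < 1) (f : ℕ → ℕ)
    (hrec : ∀ i, f (i + 1) = ⌈(f i : ℝ) ^ (1 - ε)⌉₊) (i : ℕ)
    (hfi : 1 ≤ f i) (hM : (4 : ℝ) ^ (1/ε) ≤ (f i : ℝ)) :
    2 * (f (i+1) : ℝ) ≤ (f i : ℝ) := by
  have h1 : (1 : ℝ) ≤ (f i : ℝ) := by exact_mod_cast hfi
  have hx1 : (1 : ℝ) ≤ (f i : ℝ) ^ (1 - ε) := Real.one_le_rpow h1 (by linarith)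
  have hceil : (f (i+1) : ℝ) ≤ 2 * (f i : ℝ) ^ (1 - ε) := by
    rw [hrec i]
    have := Nat.ceil_lt_add_one (by positivity : (0:ℝ) ≤ (f i : ℝ) ^ (1 - ε))
    linarith
  have hpow : (4 : ℝ) ≤ (f i : ℝ) ^ ε := by
    calc (4 : ℝ) = ((4 : ℝ) ^ (1/ε)) ^ ε := by
          rw [← Real.rpow_mul (by norm_num), one_div_mul_cancel (ne_of_gt hε0),
            Real.rpow_one]
      _ ≤ (f i : ℝ) ^ ε := Real.rpow_le_rpow (by positivity) hM (le_of_lt hε0)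
  have hsplit : (f i : ℝ) = (f i : ℝ) ^ ε * (f i : ℝ) ^ (1 - ε) := by
    rw [← Real.rpow_add (by linarith : (0:ℝ) < (f i : ℝ))]
    norm_num
  nlinarith [hx1, hceil, hpow]

lemma sum_inv_rpow_le (ε γ : ℝ) (hε0 : 0 < ε) (hε1 : ε < 1) (hγ : 0 < γ)
    (f : ℕ → ℕ) (hrec : ∀ i, f (i + 1) = ⌈(f i : ℝ) ^ (1 - ε)⌉₊) (ℓ : ℕ)
    (hℓ : f ℓ ≤ 2) (hbig : ∀ j < ℓ, 2 < f j) :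
    ∑ i ∈ Finset.range ℓ, ((f i : ℝ)) ^ (-γ)
      ≤ (4 : ℝ) ^ (1/ε) + (1 - ((2:ℝ) ^ γ)⁻¹)⁻¹ := by
  set M : ℝ := (4 : ℝ) ^ (1/ε) with hMdef
  set r : ℝ := ((2:ℝ) ^ γ)⁻¹ with hrdef
  have hM1 : (1 : ℝ) ≤ M := Real.one_le_rpow (by norm_num) (by positivity)
  have h2γ : (1 : ℝ) < (2:ℝ) ^ γ := by
    calc (1:ℝ) = (2:ℝ) ^ (0:ℝ) := by simp
      _ < (2:ℝ) ^ γ := Real.rpow_lt_rpow_of_exponent_lt (by norm_num) hγ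
  have hr0 : 0 < r := by positivity
  have hr1 : r < 1 := by
    rw [hrdef, inv_lt_one_iff₀]; right; exact h2γ
  have hgeom : (0:ℝ) < (1 - r)⁻¹ := by
    rw [inv_pos]; linarith
  have term_le_one : ∀ i < ℓ, ((f i : ℝ)) ^ (-γ) ≤ 1 := by
    intro i hi
    exact Real.rpow_le_one_of_one_le_of_nonpos
      (by exact_mod_cast (by have := hbig i hi; omega : 1 ≤ f i)) (by linarith)
  have hone : ∀ i < ℓ, 1 ≤ f i := fun i hi => by have := hbig i hi; omega
  rcases Nat.eq_zero_or_pos ℓ with h0 | hℓpos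
  · subst h0; simp; positivity
  set S := (Finset.range ℓ).filter (fun i => M ≤ (f i : ℝ)) with hSdef
  rcases eq_or_ne S ∅ with hS | hS
  · -- all small
    have hsmall : ∀ i < ℓ, (f i : ℝ) < M := by
      intro i hi
      by_contra hcon
      push_neg at hcon
      have : i ∈ S := by
        rw [hSdef, Finset.mem_filter]; exact ⟨Finset.mem_range.mpr hi, hcon⟩
      rw [hS] at this; exact absurd this (Finset.notMem_empty i)
    have hcount : (ℓ : ℝ) ≤ M := by
      have hgap := seq_gap ε hε0 f hrec ℓ hℓ hbig (ℓ - 1) 0 (by omega)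
      have h3 : 3 ≤ f (0 + (ℓ - 1)) := by
        have := hbig (0 + (ℓ-1)) (by omega); omega
      have hl0 : ℓ ≤ f 0 := by omega
      calc (ℓ : ℝ) ≤ (f 0 : ℝ) := by exact_mod_cast hl0
        _ ≤ M := (hsmall 0 hℓpos).le
    calc ∑ i ∈ Finset.range ℓ, ((f i : ℝ)) ^ (-γ)
        ≤ ∑ i ∈ Finset.range ℓ, (1:ℝ) :=
          Finset.sum_le_sum (fun i hi => term_le_one i (Finset.mem_range.mp hi))
      _ = (ℓ : ℝ) := by simp
      _ ≤ M := hcount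
      _ ≤ M + (1 - r)⁻¹ := by linarith
  · -- S nonempty
    have hSne : S.Nonempty := Finset.nonempty_iff_ne_empty.mpr hS
    set istar := S.max' hSne with histar
    have hmem : istar ∈ S := S.max'_mem hSne
    have histarlt : istar < ℓ := by
      have := (Finset.mem_filter.mp hmem).1; exact Finset.mem_range.mp this
    have hMistar : M ≤ (f istar : ℝ) := (Finset.mem_filter.mp hmem).2
    have doubling : ∀ k ≤ istar, (2:ℝ)^k * M ≤ (f (istar - k) : ℝ) := by
      intro k
      induction k with
      | zero => intro _; simpa using hMistar
      | succ m ih =>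
        intro hm
        set i := istar - (m+1) with hidef
        have hi1 : i + 1 = istar - m := by omega
        have hiℓ : i < ℓ := by omega
        have hfiM : M ≤ (f i : ℝ) := by
          have hle : f istar ≤ f i :=
            seq_mono ε hε0 f hrec ℓ hbig i istar (by omega) (by omega)
          have : (f istar : ℝ) ≤ (f i : ℝ) := by exact_mod_cast hle
          linarith
        have hhalf : 2 * (f (i+1) : ℝ) ≤ (f i : ℝ) :=
          seq_halve ε hε0 hε1 f hrec i (hone i hiℓ) hfiM
        have hIH : (2:ℝ)^m * M ≤ (f (istar - m) : ℝ) := ih (by omega)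
        rw [← hi1] at hIH
        calc (2:ℝ)^(m+1) * M = 2 * ((2:ℝ)^m * M) := by ring
          _ ≤ 2 * (f (i+1) : ℝ) := by linarith
          _ ≤ (f i : ℝ) := hhalf
    have bound_big : ∀ i ≤ istar, ((f i : ℝ)) ^ (-γ) ≤ r ^ (istar - i) := by
      intro i hi
      set k := istar - i with hkdef
      have hd := doubling k (by omega)
      rw [show istar - k = i by omega] at hd
      have h2k : (1:ℝ) ≤ (2:ℝ)^k := one_le_pow₀ (by norm_num)
      have hfk : (2:ℝ)^k ≤ (f i : ℝ) := by nlinarith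
      have hfpos : (0:ℝ) < (f i : ℝ) := lt_of_lt_of_le (by positivity) hfk
      have hstep : ((2:ℝ)^γ)^k ≤ (f i : ℝ) ^ γ := by
        have e1 : ((2:ℝ)^k : ℝ) ^ γ = ((2:ℝ)^γ)^k := by
          rw [← Real.rpow_natCast (2:ℝ) k, ← Real.rpow_mul (by norm_num),
            mul_comm, Real.rpow_mul (by norm_num), Real.rpow_natCast]
        rw [← e1]
        exact Real.rpow_le_rpow (by positivity) hfk hγ.le
      rw [Real.rpow_neg hfpos.le, hrdef, inv_pow]
      exact inv_anti₀ (by positivity) hstep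
    have hsplit : istar + 1 ≤ ℓ := by omega
    rw [← Finset.sum_range_add_sum_Ico _ hsplit]
    have hbigsum : ∑ i ∈ Finset.range (istar+1), ((f i : ℝ)) ^ (-γ) ≤ (1 - r)⁻¹ := by
      calc ∑ i ∈ Finset.range (istar+1), ((f i : ℝ)) ^ (-γ)
          ≤ ∑ i ∈ Finset.range (istar+1), r ^ (istar - i) := by
            apply Finset.sum_le_sum
            intro i hi
            exact bound_big i (Nat.lt_succ_iff.mp (Finset.mem_range.mp hi))
        _ = ∑ k ∈ Finset.range (istar+1), r ^ k := by
            rw [← Finset.sum_range_reflect (fun k => r ^ k) (istar+1)]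
            simp
        _ ≤ ∑' k : ℕ, r ^ k :=
            Summable.sum_le_tsum _ (fun k _ => pow_nonneg hr0.le k)
              (summable_geometric_of_lt_one hr0.le hr1)
        _ = (1 - r)⁻¹ := tsum_geometric_of_lt_one hr0.le hr1
    have hsmallsum : ∑ i ∈ Finset.Ico (istar+1) ℓ, ((f i : ℝ)) ^ (-γ) ≤ M := by
      have hcard : ((ℓ - (istar+1) : ℕ) : ℝ) ≤ M := by
        rcases Nat.eq_or_lt_of_le hsplit with he | hlt
        · rw [← he]; simp; linarith
        · have hnotS : (f (istar+1) : ℝ) < M := by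
            by_contra hcon
            push_neg at hcon
            have : istar + 1 ∈ S := by
              rw [hSdef, Finset.mem_filter]
              exact ⟨Finset.mem_range.mpr hlt, hcon⟩
            have := S.le_max' _ this
            omega
          have hgap := seq_gap ε hε0 f hrec ℓ hℓ hbig (ℓ - 1 - (istar+1)) (istar+1)
            (by omega)
          have h3 : 3 ≤ f ((istar+1) + (ℓ - 1 - (istar+1))) := by
            have := hbig ((istar+1) + (ℓ - 1 - (istar+1))) (by omega); omega
          have : ℓ - (istar + 1) ≤ f (istar + 1) := by omega
          calc ((ℓ - (istar+1) : ℕ) : ℝ) ≤ (f (istar+1) : ℝ) := by exact_mod_cast this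
            _ ≤ M := hnotS.le
      calc ∑ i ∈ Finset.Ico (istar+1) ℓ, ((f i : ℝ)) ^ (-γ)
          ≤ ∑ i ∈ Finset.Ico (istar+1) ℓ, (1:ℝ) := by
            apply Finset.sum_le_sum
            intro i hi
            have := Finset.mem_Ico.mp hi
            exact term_le_one i this.2
        _ = ((ℓ - (istar+1) : ℕ) : ℝ) := by simp
        _ ≤ M := hcard
    linarith

lemma term_bound (A a b p q ε γ : ℝ) (hA : 0 < A) (ha : 1 ≤ a) (hb : 0 < b)
    (hab : a ^ (1 - ε) ≤ b) (hexp : 1 + q - p - (1 - ε) = -γ) :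
    ((A / b) / (A / a)) * (A / a) ^ p * a ^ q ≤ A ^ p * a ^ (-γ) := by
  have ha0 : (0:ℝ) < a := lt_of_lt_of_le one_pos ha
  have hae : (0:ℝ) < a ^ (1 - ε) := rpow_pos_of_pos ha0 _
  have h1 : (A / b) / (A / a) = a / b := by
    field_simp
  have h2 : (A / a) ^ p = A ^ p / a ^ p := Real.div_rpow hA.le ha0.le p
  have h3 : a ^ (1 + q - p) = a * a ^ q / a ^ p := by
    rw [Real.rpow_sub ha0, Real.rpow_add ha0, Real.rpow_one]
  have key : ((A / b) / (A / a)) * (A / a) ^ p * a ^ q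
      = A ^ p * (a ^ (1 + q - p) / b) := by
    rw [h1, h2, h3]; ring
  rw [key]
  have h4 : a ^ (1 + q - p) / b ≤ a ^ (1 + q - p) / a ^ (1 - ε) :=
    (div_le_div_iff_of_pos_left (rpow_pos_of_pos ha0 _) hb hae).mpr hab
  have h5 : a ^ (1 + q - p) / a ^ (1 - ε) = a ^ (-γ) := by
    rw [← Real.rpow_sub ha0, hexp]
  have h6 : a ^ (1 + q - p) / b ≤ a ^ (-γ) := h5 ▸ h4
  exact mul_le_mul_of_nonneg_left h6 (rpow_nonneg hA.le p)

theorem stmt_11 (d : ℕ) (hd : 2 ≤ d) (ε : ℝ) (hε0 : 0 < ε)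
    (hε : ε < (1 / ((d : ℝ) - 1) - 1 / d) / 2) :
    ∃ C : ℝ, 0 < C ∧ ∀ n : ℕ, 2 ≤ n → ∀ f : ℕ → ℕ, f 0 = n →
      (∀ i, f (i + 1) = ⌈(f i : ℝ) ^ (1 - ε)⌉₊) →
      ∀ ℓ : ℕ, f ℓ ≤ 2 → (∀ j < ℓ, 2 < f j) →
        ∑ i ∈ Finset.range ℓ,
            (((n : ℝ) / (f (i + 1) : ℝ)) / ((n : ℝ) / (f i : ℝ)))
              * ((n : ℝ) / (f i : ℝ)) ^ (1 - 1 / (d : ℝ))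
              * (f i : ℝ) ^ (1 - 1 / ((d : ℝ) - 1) + ε)
          ≤ C * (n : ℝ) ^ (1 - 1 / (d : ℝ)) := by
  have hd2 : (2:ℝ) ≤ (d:ℝ) := by exact_mod_cast hd
  have hd1pos : (0:ℝ) < (d:ℝ) - 1 := by linarith
  have hdpos : (0:ℝ) < (d:ℝ) := by linarith
  set γ : ℝ := 1 / ((d:ℝ) - 1) - 1 / (d:ℝ) - 2 * ε with hγdef
  have hγ : 0 < γ := by rw [hγdef]; linarith
  have hinv1 : 1 / ((d:ℝ) - 1) ≤ 1 := by
    rw [div_le_one hd1pos]; linarith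
  have hinvd : (0:ℝ) < 1 / (d:ℝ) := by positivity
  have hε1 : ε < 1 := by linarith
  have h2γ : (1 : ℝ) < (2:ℝ) ^ γ := by
    calc (1:ℝ) = (2:ℝ) ^ (0:ℝ) := by simp
      _ < (2:ℝ) ^ γ := Real.rpow_lt_rpow_of_exponent_lt (by norm_num) hγ
  have hgeom : (0:ℝ) < (1 - ((2:ℝ) ^ γ)⁻¹)⁻¹ := by
    rw [inv_pos]
    have : ((2:ℝ) ^ γ)⁻¹ < 1 := by
      rw [inv_lt_one_iff₀]; right; exact h2γ
    linarith
  refine ⟨(4 : ℝ) ^ (1/ε) + (1 - ((2:ℝ) ^ γ)⁻¹)⁻¹, by positivity, ?_⟩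
  intro n hn f hf0 hrec ℓ hfℓ hbig
  have hsum := sum_inv_rpow_le ε γ hε0 hε1 hγ f hrec ℓ hfℓ hbig
  have hA : (0:ℝ) < (n:ℝ) := by exact_mod_cast (by omega : 0 < n)
  have hterm : ∀ i ∈ Finset.range ℓ,
      (((n : ℝ) / (f (i + 1) : ℝ)) / ((n : ℝ) / (f i : ℝ)))
        * ((n : ℝ) / (f i : ℝ)) ^ (1 - 1 / (d : ℝ))
        * (f i : ℝ) ^ (1 - 1 / ((d : ℝ) - 1) + ε)
      ≤ (n:ℝ) ^ (1 - 1 / (d:ℝ)) * (f i : ℝ) ^ (-γ) := by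
    intro i hi
    have hiℓ : i < ℓ := Finset.mem_range.mp hi
    have ha : (1:ℝ) ≤ (f i : ℝ) := by
      have := hbig i hiℓ; exact_mod_cast by omega
    have hab : (f i : ℝ) ^ (1 - ε) ≤ (f (i+1) : ℝ) := by
      rw [hrec i]; exact Nat.le_ceil _
    have hb : (0:ℝ) < (f (i+1) : ℝ) :=
      lt_of_lt_of_le (Real.rpow_pos_of_pos (by linarith) _) hab
    exact term_bound (n:ℝ) (f i : ℝ) (f (i+1) : ℝ) (1 - 1/(d:ℝ))
      (1 - 1/((d:ℝ)-1) + ε) ε γ hA ha hb hab (by rw [hγdef]; ring)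
  calc ∑ i ∈ Finset.range ℓ,
        (((n : ℝ) / (f (i + 1) : ℝ)) / ((n : ℝ) / (f i : ℝ)))
          * ((n : ℝ) / (f i : ℝ)) ^ (1 - 1 / (d : ℝ))
          * (f i : ℝ) ^ (1 - 1 / ((d : ℝ) - 1) + ε)
      ≤ ∑ i ∈ Finset.range ℓ, (n:ℝ) ^ (1 - 1 / (d:ℝ)) * (f i : ℝ) ^ (-γ) :=
        Finset.sum_le_sum hterm
    _ = (n:ℝ) ^ (1 - 1 / (d:ℝ)) * ∑ i ∈ Finset.range ℓ, (f i : ℝ) ^ (-γ) := by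
        rw [Finset.mul_sum]
    _ ≤ (n:ℝ) ^ (1 - 1 / (d:ℝ)) * ((4 : ℝ) ^ (1/ε) + (1 - ((2:ℝ) ^ γ)⁻¹)⁻¹) :=
        mul_le_mul_of_nonneg_left hsum (Real.rpow_nonneg hA.le _)
    _ = ((4 : ℝ) ^ (1/ε) + (1 - ((2:ℝ) ^ γ)⁻¹)⁻¹) * (n:ℝ) ^ (1 - 1 / (d:ℝ)) :=
        mul_comm _ _
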